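/- Let Σ₆⁻¹ = [[0,0,1],[0,1/12,0],[1,0,0]] be the inverse of Σ₆ over ℚ. Then for each M ∈ {M₀, M_{a₁}, M_{a₂}}, every entry of the matrix (M − I₃)·Σ₆⁻¹ is an integer, whereas the matrix (U − I₃)·Σ₆⁻¹ has at least one non-integer entry. (Thus M₀, M_{a₁}, M_{a₂} act trivially on the discriminant group of the lattice (ℤ³, Σ₆), i.e. lie in O(M̌₆^⊥)*, while U lies in O(M̌₆^⊥) \ O(M̌₆^⊥)*.) -/

import Mathlib

open Matrix

/-- Monodromy matrix around `x = 0` (over ℚ). -/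
def M₀ : Matrix (Fin 3) (Fin 3) ℚ := !![1, 0, 0; 1, 1, 0; -6, -12, 1]

/-- Monodromy matrix around `x = a₁` (over ℚ). -/
def Ma₁ : Matrix (Fin 3) (Fin 3) ℚ := !![0, 0, 1; 0, 1, 0; 1, 0, 0]

/-- Monodromy matrix around `x = a₂` (over ℚ). -/
def Ma₂ : Matrix (Fin 3) (Fin 3) ℚ := !![-24, 120, 25; -10, 49, 10; 25, -120, -24]

/-- The connection matrix `U` (over ℚ). -/
def U : Matrix (Fin 3) (Fin 3) ℚ := !![3, 12, -2; 1, 5, -1; -2, -12, 3]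

/-- `Σ₆⁻¹ = [[0,0,1],[0,1/12,0],[1,0,0]]`, the inverse of `Σ₆` over ℚ. -/
def Sigma6inv : Matrix (Fin 3) (Fin 3) ℚ := !![0, 0, 1; 0, 1/12, 0; 1, 0, 0]

/-- `M₀, M_{a₁}, M_{a₂}` act trivially on the discriminant group of `(ℤ³, Σ₆)`:
every entry of `(M − I₃)·Σ₆⁻¹` is an integer; whereas `(U − I₃)·Σ₆⁻¹` has a
non-integer entry, so `U ∈ O(M̌₆^⊥) \ O(M̌₆^⊥)*`. -/
theorem discriminant_action :
    (∀ M ∈ ({M₀, Ma₁, Ma₂} : Set (Matrix (Fin 3) (Fin 3) ℚ)),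
      ∀ i j : Fin 3, ∃ n : ℤ, ((M - 1) * Sigma6inv) i j = (n : ℚ)) ∧
    (∃ i j : Fin 3, ¬ ∃ n : ℤ, ((U - 1) * Sigma6inv) i j = (n : ℚ)) := by
  constructor
  · intro M hM i j
    rcases hM with rfl | rfl | rfl <;>
      fin_cases i <;> fin_cases j <;>
      simp only [M₀, Ma₁, Ma₂, Sigma6inv, Matrix.mul_apply, Fin.sum_univ_three,
        Matrix.sub_apply, Matrix.one_fin_three, Matrix.vecHead, Matrix.vecTail, Function.comp, Matrix.of_apply, Matrix.cons_val', Matrix.cons_val_fin_one, Matrix.cons_val_zero, Matrix.cons_val_one, Matrix.cons_val_two, Matrix.head_cons, Matrix.tail_cons, Matrix.cons_val_succ] <;>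
      first
        | (refine ⟨0, ?_⟩; norm_num <;> rfl)
        | (refine ⟨1, ?_⟩; norm_num <;> rfl)
        | (refine ⟨-1, ?_⟩; norm_num <;> rfl)
        | (refine ⟨-6, ?_⟩; norm_num <;> rfl)
        | (refine ⟨25, ?_⟩; norm_num <;> rfl)
        | (refine ⟨10, ?_⟩; norm_num <;> rfl)
        | (refine ⟨-25, ?_⟩; norm_num <;> rfl)
        | (refine ⟨-10, ?_⟩; norm_num <;> rfl)
        | (refine ⟨4, ?_⟩; norm_num <;> rfl)
  · refine ⟨1, 1, ?_⟩
    rintro ⟨n, hn⟩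
    simp [U, Sigma6inv, Matrix.mul_apply, Fin.sum_univ_three,
      Matrix.sub_apply, Matrix.one_fin_three, Matrix.vecHead, Matrix.vecTail] at hn
    have : (3 : ℚ) * n = 1 := by linarith
    have h2 : (3 * n : ℤ) = 1 := by exact_mod_cast this
    omega
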